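/- For natural numbers k < 2^d and r, the coefficient of x^r in ∏_{0 ≤ j < d, bit j of k is 0} (1 + x^{2^j}) equals 1 if r AND k = 0 and r < 2^d, and 0 otherwise. -/

import Mathlib

open Polynomial Finset

lemma aux_and_eq_zero_iff (a b : ℕ) :
    a &&& b = 0 ↔ ∀ i, a.testBit i = false ∨ b.testBit i = false := by
  constructor
  · intro h i
    have := congrArg (fun n => Nat.testBit n i) h
    simp only [Nat.testBit_and, Nat.zero_testBit, Bool.and_eq_false_iff] at this
    exact this
  · intro h
    apply Nat.eq_of_testBit_eq
    intro i
    simp only [Nat.testBit_and, Nat.zero_testBit, Bool.and_eq_false_iff]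
    exact h i

lemma aux_testBit_false_of_lt {x : ℕ} {d i : ℕ} (h : x < 2 ^ d) (hi : d ≤ i) :
    x.testBit i = false :=
  Nat.testBit_lt_two_pow (lt_of_lt_of_le h (Nat.pow_le_pow_right (by norm_num) hi))

lemma aux_lt_of_testBit_false {r d : ℕ} (h : r < 2 ^ (d + 1)) (hb : r.testBit d = false) :
    r < 2 ^ d := by
  apply Nat.lt_pow_two_of_testBit
  intro i hi
  rcases eq_or_lt_of_le hi with rfl | hi'
  · exact hb
  · exact aux_testBit_false_of_lt h hi'

theorem coeff_mask_factor (d k r : ℕ) (hk : k < 2 ^ d) :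
    (∏ j ∈ (Finset.range d).filter (fun j => ¬ k.testBit j),
        (1 + (X : ℤ[X]) ^ (2 ^ j))).coeff r =
      if r &&& k = 0 ∧ r < 2 ^ d then 1 else 0 := by
  induction d generalizing k r with
  | zero =>
    have hk0 : k = 0 := by omega
    subst hk0
    simp only [Finset.range_zero, Finset.filter_empty, Finset.prod_empty,
      Polynomial.coeff_one, Nat.and_zero, pow_zero, Nat.lt_one_iff, true_and]
  | succ d ih =>
    have hpd : (0:ℕ) < 2 ^ d := Nat.pow_pos (by norm_num)
    rw [Finset.range_add_one, Finset.filter_insert]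
    by_cases hd : k.testBit d
    · -- bit d of k is set
      rw [if_neg (by simp [hd])]
      have hkd : 2 ^ d ≤ k := by
        by_contra h
        rw [Nat.testBit_lt_two_pow (by omega)] at hd
        exact Bool.false_ne_true hd
      have hfilter : (Finset.range d).filter (fun j => ¬ k.testBit j) =
          (Finset.range d).filter (fun j => ¬ (k % 2 ^ d).testBit j) := by
        apply Finset.filter_congr
        intro j hj
        simp only [Finset.mem_range] at hj
        simp [Nat.testBit_mod_two_pow, hj]
      rw [hfilter, ih (k % 2 ^ d) r (Nat.mod_lt _ hpd)]
      have hiff : (r &&& k % 2 ^ d = 0 ∧ r < 2 ^ d) ↔ (r &&& k = 0 ∧ r < 2 ^ (d + 1)) := by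
        constructor
        · rintro ⟨h1, h2⟩
          rw [aux_and_eq_zero_iff] at h1 ⊢
          refine ⟨fun i => ?_, lt_of_lt_of_le h2 (Nat.pow_le_pow_right (by norm_num) (by omega))⟩
          rcases lt_or_ge i d with hi | hi
          · rcases h1 i with h | h
            · exact Or.inl h
            · right
              rw [Nat.testBit_mod_two_pow] at h
              simpa [hi] using h
          · exact Or.inl (aux_testBit_false_of_lt h2 hi)
        · rintro ⟨h1, h2⟩
          rw [aux_and_eq_zero_iff] at h1
          have hrd : r.testBit d = false := by
            rcases h1 d with h | h
            · exact h
            · rw [hd] at h; exact absurd h (by simp)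
          have hr : r < 2 ^ d := aux_lt_of_testBit_false h2 hrd
          refine ⟨?_, hr⟩
          rw [aux_and_eq_zero_iff]
          intro i
          rcases h1 i with h | h
          · exact Or.inl h
          · right; rw [Nat.testBit_mod_two_pow, h]; simp
      simp only [hiff]
    · -- bit d of k is not set
      rw [if_pos (by simp [hd])]
      have hkd : k < 2 ^ d := by
        by_contra h
        have hk1 : k / 2 ^ d = 1 := by
          rw [pow_succ] at hk
          refine Nat.div_eq_of_lt_le (by omega) (by omega)
        rw [Nat.testBit_eq_decide_div_mod_eq, hk1] at hd
        simp at hd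
      rw [Finset.prod_insert (by simp), add_mul, one_mul, Polynomial.coeff_add,
        mul_comm, Polynomial.coeff_mul_X_pow', ih k r hkd]
      rcases lt_or_ge r (2 ^ d) with hr | hr
      · rw [if_neg (show ¬ 2 ^ d ≤ r by omega), add_zero]
        have : (r &&& k = 0 ∧ r < 2 ^ d) ↔ (r &&& k = 0 ∧ r < 2 ^ (d + 1)) := by
          constructor
          · rintro ⟨h1, _⟩
            exact ⟨h1, lt_of_lt_of_le hr (Nat.pow_le_pow_right (by norm_num) (by omega))⟩
          · rintro ⟨h1, _⟩; exact ⟨h1, hr⟩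
        simp only [this]
      · rw [if_pos hr, ih k (r - 2 ^ d) hkd,
          if_neg (show ¬(r &&& k = 0 ∧ r < 2 ^ d) from fun h => absurd h.2 (by omega)), zero_add]
        have hmod : ∀ i, i < d → r.testBit i = (r - 2 ^ d).testBit i ∨ 2 ^ (d+1) ≤ r := by
          intro i hi
          rcases lt_or_ge r (2 ^ (d+1)) with hr2 | hr2
          · left
            have hs : r % 2 ^ d = r - 2 ^ d := by
              have hlt : r - 2 ^ d < 2 ^ d := by rw [pow_succ] at hr2; omega
              have heq : r = 2 ^ d + (r - 2 ^ d) := by omega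
              have h1 : (2 ^ d + (r - 2 ^ d)) % 2 ^ d = (r - 2 ^ d) % 2 ^ d :=
                Nat.add_mod_left _ _
              rw [Nat.mod_eq_of_lt hlt] at h1
              calc r % 2 ^ d = (2 ^ d + (r - 2 ^ d)) % 2 ^ d := by rw [← heq]
                _ = r - 2 ^ d := h1
            rw [← hs]
            rw [Nat.testBit_mod_two_pow]
            simp [hi]
          · right; exact hr2
        have hiff : ((r - 2 ^ d) &&& k = 0 ∧ r - 2 ^ d < 2 ^ d) ↔
            (r &&& k = 0 ∧ r < 2 ^ (d + 1)) := by
          constructor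
          · rintro ⟨h1, h2⟩
            have hr2 : r < 2 ^ (d + 1) := by rw [pow_succ]; omega
            refine ⟨?_, hr2⟩
            rw [aux_and_eq_zero_iff] at h1 ⊢
            intro i
            rcases lt_or_ge i d with hi | hi
            · rcases hmod i hi with h | h
              · rcases h1 i with h' | h'
                · left; rw [h, h']
                · exact Or.inr h'
              · omega
            · exact Or.inr (aux_testBit_false_of_lt hkd hi)
          · rintro ⟨h1, h2⟩
            have h2' : r - 2 ^ d < 2 ^ d := by rw [pow_succ] at h2; omega
            refine ⟨?_, h2'⟩
            rw [aux_and_eq_zero_iff] at h1 ⊢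
            intro i
            rcases lt_or_ge i d with hi | hi
            · rcases hmod i hi with h | h
              · rcases h1 i with h' | h'
                · left; rw [← h, h']
                · exact Or.inr h'
              · omega
            · exact Or.inl (aux_testBit_false_of_lt h2' hi)
        simp only [hiff]
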